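/- Let Ψ be an Orlicz function such that ∫_{Ψ(1)}^{∞} dx / Ψ(B·Ψ⁻¹(x)) < ∞ for some B > 1, and let φ : 𝕋 → ℂ be measurable with |φ| ≤ 1 and m({w : |φ(w)| = 1}) = 0. If for every A > 0 there is K_A > 0 such that m({w ∈ 𝕋 : 1−|φ(w)| < λ}) ≤ K_A / Ψ(A·Ψ⁻¹(1/λ)) for all λ ∈ (0,1], then ∫_𝕋 Ψ( C·Ψ⁻¹( 1/(1−|φ(w)|) ) ) dm(w) < ∞ for every C > 0. -/

import Mathlib

open MeasureTheory

/-- The normalized Lebesgue (Haar) measure on the unit circle `𝕋 ⊆ ℂ`,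
realized as a measure on `ℂ` carried by the circle. -/
noncomputable def circleMeasure : Measure ℂ :=
  (ENNReal.ofReal (2 * Real.pi))⁻¹ •
    (Measure.map (fun t : ℝ => Complex.exp (t * Complex.I))
      (volume.restrict (Set.Ioc 0 (2 * Real.pi))))

lemma circleMeasure_univ : circleMeasure Set.univ = 1 := by
  have hmeas : Measurable fun t : ℝ => Complex.exp (t * Complex.I) := by
    fun_prop
  rw [circleMeasure, Measure.smul_apply, Measure.map_apply hmeas MeasurableSet.univ]
  simp only [Set.preimage_univ, Measure.restrict_apply_univ, Real.volume_Ioc, sub_zero,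
    smul_eq_mul]
  exact ENNReal.inv_mul_cancel (by simp [Real.pi_pos, Real.pi_ne_zero]) ENNReal.ofReal_ne_top

lemma circleMeasure_off_circle : circleMeasure {w : ℂ | ‖w‖ ≠ 1} = 0 := by
  have hmeas : Measurable fun t : ℝ => Complex.exp (t * Complex.I) := by fun_prop
  have hset : MeasurableSet {w : ℂ | ‖w‖ ≠ 1} :=
    (continuous_norm.measurable (measurableSet_singleton 1)).compl
  rw [circleMeasure, Measure.smul_apply, Measure.map_apply hmeas hset]
  have : (fun t : ℝ => Complex.exp (t * Complex.I)) ⁻¹' {w : ℂ | ‖w‖ ≠ 1} = ∅ := by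
    ext t
    simp [Complex.norm_exp_ofReal_mul_I]
  rw [this]
  simp

theorem stmt_10
    (Ψ Ψinv : ℝ → ℝ)
    (hΨ0 : Ψ 0 = 0)
    (hΨmono : StrictMonoOn Ψ (Set.Ici 0))
    (hΨconv : StrictConvexOn ℝ (Set.Ici 0) Ψ)
    (hΨcont : ContinuousOn Ψ (Set.Ici 0))
    (hΨlim : Filter.Tendsto (fun x => Ψ x / x) Filter.atTop Filter.atTop)
    (hΨinv1 : ∀ x, 0 ≤ x → Ψinv (Ψ x) = x)
    (hΨinv2 : ∀ y, 0 ≤ y → Ψ (Ψinv y) = y)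
    (hΨinv0 : ∀ y, 0 ≤ y → 0 ≤ Ψinv y)
    (hint : ∃ B > (1 : ℝ),
      (∫⁻ x in Set.Ioi (Ψ 1), ENNReal.ofReal (1 / Ψ (B * Ψinv x))) < ⊤)
    (φ : ℂ → ℂ) (hφmeas : Measurable φ)
    (hφbd : ∀ w : ℂ, ‖w‖ = 1 → ‖φ w‖ ≤ 1)
    (hφ1 : circleMeasure {w : ℂ | ‖φ w‖ = 1} = 0)
    (hOB : ∀ A > (0 : ℝ), ∃ K > (0 : ℝ), ∀ lam : ℝ, 0 < lam → lam ≤ 1 →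
      circleMeasure {w : ℂ | 1 - ‖φ w‖ < lam}
        ≤ ENNReal.ofReal (K / Ψ (A * Ψinv (1 / lam)))) :
    ∀ C > (0 : ℝ),
      (∫⁻ w, ENNReal.ofReal (Ψ (C * Ψinv (1 / (1 - ‖φ w‖))))
        ∂circleMeasure) < ⊤ := by
  obtain ⟨B, hB1, hBint⟩ := hint
  have hB0 : (0:ℝ) < B := lt_trans one_pos hB1
  have hmono : MonotoneOn Ψ (Set.Ici 0) := hΨmono.monotoneOn
  have hΨnn : ∀ x : ℝ, 0 ≤ x → 0 ≤ Ψ x := by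
    intro x hx
    have := hmono (Set.mem_Ici.mpr le_rfl) (Set.mem_Ici.mpr hx) hx
    rwa [hΨ0] at this
  have hΨ1pos : 0 < Ψ 1 := by
    have := hΨmono (Set.mem_Ici.mpr le_rfl) (Set.mem_Ici.mpr zero_le_one) one_pos
    rwa [hΨ0] at this
  have hinvmono : ∀ y z : ℝ, 0 ≤ y → y ≤ z → Ψinv y ≤ Ψinv z := by
    intro y z hy hyz
    have hz : 0 ≤ z := hy.trans hyz
    refine (hΨmono.le_iff_le (Set.mem_Ici.mpr (hΨinv0 y hy))
      (Set.mem_Ici.mpr (hΨinv0 z hz))).mp ?_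
    rw [hΨinv2 y hy, hΨinv2 z hz]; exact hyz
  haveI : IsProbabilityMeasure circleMeasure := ⟨circleMeasure_univ⟩
  intro C hC
  obtain ⟨K, hK0, hKbd⟩ := hOB (B * C) (mul_pos hB0 hC)
  set g : ℂ → ℝ := fun w => 1 / (1 - ‖φ w‖) with hgdef
  set h : ℝ → ℝ := fun t => Ψ (C * Ψinv (max t 1)) with hhdef
  have hmax1 : ∀ t : ℝ, (0:ℝ) ≤ max t 1 := fun t => zero_le_one.trans (le_max_right t 1)
  have hhnn : ∀ t : ℝ, 0 ≤ C * Ψinv (max t 1) :=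
    fun t => mul_nonneg hC.le (hΨinv0 _ (hmax1 t))
  have hhmono : Monotone h := by
    intro t1 t2 h12
    exact hmono (Set.mem_Ici.mpr (hhnn t1)) (Set.mem_Ici.mpr (hhnn t2))
      (mul_le_mul_of_nonneg_left
        (hinvmono _ _ (hmax1 t1) (max_le_max h12 le_rfl)) hC.le)
  have hgmeas : Measurable g := by
    have habs : Measurable fun w => ‖φ w‖ :=
      continuous_norm.measurable.comp hφmeas
    exact measurable_const.div (measurable_const.sub habs)
  -- a.e. rewrite
  have hae : (fun w => ENNReal.ofReal (Ψ (C * Ψinv (1 / (1 - ‖φ w‖)))))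
      =ᵐ[circleMeasure] fun w => ENNReal.ofReal (h (g w)) := by
    have h1 : ∀ᵐ w ∂circleMeasure, ‖w‖ = 1 := by
      rw [ae_iff]; exact circleMeasure_off_circle
    have h2 : ∀ᵐ w ∂circleMeasure, ‖φ w‖ ≠ 1 := by
      rw [ae_iff]; simpa only [not_not] using hφ1
    filter_upwards [h1, h2] with w hw1 hw2
    have hlt : ‖φ w‖ < 1 := lt_of_le_of_ne (hφbd w hw1) hw2
    have hx : 0 < 1 - ‖φ w‖ := by linarith
    have hx1 : 1 - ‖φ w‖ ≤ 1 := by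
      have := norm_nonneg (φ w); linarith
    have hg1 : 1 ≤ g w := by
      rw [hgdef]; dsimp only
      rw [le_div_iff₀ hx]; linarith
    simp only [hgdef] at hg1; simp only [hhdef, hgdef, max_eq_left hg1]
  rw [lintegral_congr_ae hae]
  have hcompmeas : Measurable fun w => h (g w) := hhmono.measurable.comp hgmeas
  have hnn : 0 ≤ᵐ[circleMeasure] fun w => h (g w) :=
    Filter.Eventually.of_forall fun w => hΨnn _ (hhnn (g w))
  rw [lintegral_eq_lintegral_meas_lt circleMeasure hnn hcompmeas.aemeasurable]
  set t₀ : ℝ := max (Ψ 1) (Ψ (C * Ψinv 1)) with ht₀def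
  have ht₀pos : 0 < t₀ := lt_of_lt_of_le hΨ1pos (le_max_left _ _)
  set q : ℝ → ℝ := fun t => Ψ (B * Ψinv (max t 0)) with hqdef
  have hqnn : ∀ t : ℝ, 0 ≤ B * Ψinv (max t 0) :=
    fun t => mul_nonneg hB0.le (hΨinv0 _ (le_max_right t 0))
  have hqmono : Monotone q := by
    intro t1 t2 h12
    exact hmono (Set.mem_Ici.mpr (hqnn t1)) (Set.mem_Ici.mpr (hqnn t2))
      (mul_le_mul_of_nonneg_left
        (hinvmono _ _ (le_max_right t1 0) (max_le_max h12 le_rfl)) hB0.le)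
  -- distribution bound on (t₀, ∞)
  have key : ∀ t ∈ Set.Ioi t₀,
      circleMeasure {w : ℂ | t < h (g w)} ≤ ENNReal.ofReal (K / q t) := by
    intro t ht
    rw [Set.mem_Ioi] at ht
    have ht0 : 0 < t := lt_trans ht₀pos ht
    have hΨinvt : 0 ≤ Ψinv t := hΨinv0 t ht0.le
    have hrc : 0 ≤ Ψinv t / C := div_nonneg hΨinvt hC.le
    set r : ℝ := Ψ (Ψinv t / C) with hrdef
    have hr1 : 1 ≤ r := by
      have hC1nn : 0 ≤ C * Ψinv 1 := mul_nonneg hC.le (hΨinv0 1 zero_le_one)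
      have ht' : Ψ (C * Ψinv 1) ≤ t := le_of_lt (lt_of_le_of_lt (le_max_right _ _) ht)
      have h1 : C * Ψinv 1 ≤ Ψinv t := by
        have := hinvmono _ _ (hΨnn _ hC1nn) ht'
        rwa [hΨinv1 _ hC1nn] at this
      have h2 : Ψinv 1 ≤ Ψinv t / C := (le_div_iff₀ hC).mpr (by linarith [mul_comm C (Ψinv 1)])
      have := hmono (Set.mem_Ici.mpr (hΨinv0 1 zero_le_one)) (Set.mem_Ici.mpr hrc) h2
      rwa [hΨinv2 1 zero_le_one] at this
    have hr0 : 0 < r := lt_of_lt_of_le one_pos hr1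
    set lam : ℝ := 1 / r with hlamdef
    have hlam0 : 0 < lam := by positivity
    have hlam1 : lam ≤ 1 := by rw [hlamdef]; rw [div_le_one hr0]; exact hr1
    have hsub : {w : ℂ | t < h (g w)} ⊆ {w : ℂ | 1 - ‖φ w‖ < lam} := by
      intro w hw
      rw [Set.mem_setOf_eq] at hw ⊢
      have hmaxnn : (0:ℝ) ≤ max (g w) 1 := hmax1 _
      have h1 : Ψ (Ψinv t) < Ψ (C * Ψinv (max (g w) 1)) := by
        rw [hΨinv2 t ht0.le]; exact hw
      have h2 : Ψinv t < C * Ψinv (max (g w) 1) :=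
        (hΨmono.lt_iff_lt (Set.mem_Ici.mpr hΨinvt) (Set.mem_Ici.mpr (hhnn (g w)))).mp h1
      have h3 : Ψinv t / C < Ψinv (max (g w) 1) :=
        (div_lt_iff₀ hC).mpr (by linarith [mul_comm C (Ψinv (max (g w) 1))])
      have h4 : r < max (g w) 1 := by
        have := hΨmono (Set.mem_Ici.mpr hrc) (Set.mem_Ici.mpr (hΨinv0 _ hmaxnn)) h3
        rwa [hΨinv2 _ hmaxnn] at this
      have h5 : r < g w := by
        rcases lt_max_iff.mp h4 with h | h
        · exact h
        · linarith
      set x := 1 - ‖φ w‖ with hxdef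
      have hx0 : 0 < x := by
        by_contra hxc
        push_neg at hxc
        have : g w ≤ 0 := by
          rw [hgdef]; dsimp only; rw [← hxdef]
          exact div_nonpos_of_nonneg_of_nonpos zero_le_one hxc
        linarith
      have h6 : r < 1 / x := h5
      have h7 : r * x < 1 := (lt_div_iff₀ hx0).mp h6
      rw [hlamdef, lt_div_iff₀ hr0]
      linarith [mul_comm r x]
    calc circleMeasure {w : ℂ | t < h (g w)}
        ≤ circleMeasure {w : ℂ | 1 - ‖φ w‖ < lam} := measure_mono hsub
      _ ≤ ENNReal.ofReal (K / Ψ (B * C * Ψinv (1 / lam))) := hKbd lam hlam0 hlam1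
      _ = ENNReal.ofReal (K / q t) := by
          congr 2
          rw [hlamdef, one_div_one_div, hrdef, hΨinv1 _ hrc, hqdef]
          dsimp only
          rw [max_eq_left ht0.le]
          congr 1
          field_simp
  -- split the layer-cake integral
  have hsplit : Set.Ioi (0:ℝ) = Set.Ioc 0 t₀ ∪ Set.Ioi t₀ :=
    (Set.Ioc_union_Ioi_eq_Ioi ht₀pos.le).symm
  rw [hsplit, lintegral_union measurableSet_Ioi (Set.Ioc_disjoint_Ioi le_rfl)]
  have part1 : (∫⁻ t in Set.Ioc (0:ℝ) t₀, circleMeasure {w : ℂ | t < h (g w)}) < ⊤ := by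
    calc (∫⁻ t in Set.Ioc (0:ℝ) t₀, circleMeasure {w : ℂ | t < h (g w)})
        ≤ ∫⁻ _ in Set.Ioc (0:ℝ) t₀, 1 := lintegral_mono fun t => prob_le_one
      _ = volume (Set.Ioc (0:ℝ) t₀) := setLIntegral_one _
      _ < ⊤ := by rw [Real.volume_Ioc]; exact ENNReal.ofReal_lt_top
  have part2 : (∫⁻ t in Set.Ioi t₀, circleMeasure {w : ℂ | t < h (g w)}) < ⊤ := by
    have hqmeas : Measurable fun t => ENNReal.ofReal (K / q t) :=
      (measurable_const.div hqmono.measurable).ennreal_ofReal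
    have step1 : (∫⁻ t in Set.Ioi t₀, circleMeasure {w : ℂ | t < h (g w)})
        ≤ ∫⁻ t in Set.Ioi t₀, ENNReal.ofReal (K / q t) :=
      setLIntegral_mono hqmeas key
    have step2 : (∫⁻ t in Set.Ioi t₀, ENNReal.ofReal (K / q t))
        = ENNReal.ofReal K * ∫⁻ t in Set.Ioi t₀, ENNReal.ofReal (1 / q t) := by
      rw [← lintegral_const_mul' _ _ ENNReal.ofReal_ne_top]
      refine lintegral_congr fun t => ?_
      rw [← ENNReal.ofReal_mul hK0.le, mul_one_div]
    have step3 : (∫⁻ t in Set.Ioi t₀, ENNReal.ofReal (1 / q t))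
        ≤ ∫⁻ t in Set.Ioi (Ψ 1), ENNReal.ofReal (1 / q t) :=
      lintegral_mono_set (Set.Ioi_subset_Ioi (le_max_left _ _))
    have step4 : (∫⁻ t in Set.Ioi (Ψ 1), ENNReal.ofReal (1 / q t))
        = ∫⁻ t in Set.Ioi (Ψ 1), ENNReal.ofReal (1 / Ψ (B * Ψinv t)) := by
      refine setLIntegral_congr_fun measurableSet_Ioi
        (fun t ht => ?_)
      rw [Set.mem_Ioi] at ht
      have ht0 : 0 < t := lt_trans hΨ1pos ht
      rw [hqdef]
      dsimp only
      rw [max_eq_left ht0.le]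
    refine lt_of_le_of_lt step1 ?_
    rw [step2]
    exact ENNReal.mul_lt_top ENNReal.ofReal_lt_top
      (lt_of_le_of_lt step3 (step4 ▸ hBint))
  exact ENNReal.add_lt_top.mpr ⟨part1, part2⟩
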